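/- In a Vertical Barrier Model with parameters (a, b) and P̲(B) > 0, the conditional coefficients a_B = a/(b·P₀(B) + 1 − b), b_B = b·P₀(B)/(b·P₀(B) + 1 − b) satisfy b_B > 0, a_B ≤ 0, and 0 < a_B + b_B ≤ 1; i.e. the conditional model given by these coefficients is again a VBM. -/

import Mathlib

/-- In a VBM with `Plow B > 0` (i.e. `b * P0 B + a > 0`), the conditional
coefficients `a_B = a / (b * P0 B + 1 - b)` and `b_B = b * P0 B / (b * P0 B + 1 - b)`
satisfy `b_B > 0`, `a_B ≤ 0` and `0 < a_B + b_B ≤ 1`: the conditional model is again a VBM. -/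
theorem stmt5 {Ω : Type*} (P0 : Set Ω → ℝ)
    (hP0u : P0 Set.univ = 1) (hP0e : P0 ∅ = 0) (hP0nn : ∀ E, 0 ≤ P0 E)
    (hP0le1 : ∀ E, P0 E ≤ 1)
    (hP0add : ∀ E F : Set Ω, Disjoint E F → P0 (E ∪ F) = P0 E + P0 F)
    (a b : ℝ) (hb : 0 < b) (ha : a ≤ 0) (hab0 : 0 ≤ a + b) (hab1 : a + b ≤ 1)
    (B : Set Ω) (hB : 0 < b * P0 B + a)
    (aB bB : ℝ)
    (haB : aB = a / (b * P0 B + 1 - b))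
    (hbB : bB = b * P0 B / (b * P0 B + 1 - b)) :
    0 < bB ∧ aB ≤ 0 ∧ 0 < aB + bB ∧ aB + bB ≤ 1 := by
  have hd : 0 < b * P0 B + 1 - b := by linarith
  subst haB hbB
  refine ⟨div_pos (by linarith) hd, div_nonpos_of_nonpos_of_nonneg ha hd.le, ?_, ?_⟩
  · rw [← add_div]
    exact div_pos (by linarith) hd
  · rw [← add_div, div_le_one hd]
    linarith
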